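/- Let X be a real Banach space. Then X is a Gelfand-Phillips space (i.e. every limited subset of X is relatively norm-compact) if and only if for every Lipschitz function f : X → ℝ and every x ∈ X, f is Gâteaux differentiable at x if and only if f is limited differentiable at x. -/

import Mathlib

open Bornology Filter Metric Set
open scoped NNReal Pointwise

section Defs

variable {X Z : Type*} [NormedAddCommGroup X] [NormedSpace ℝ X]
variable [NormedAddCommGroup Z] [NormedSpace ℝ Z]

/-- `f` is `β`-differentiable at `x₀` with differential `L`. -/
def BetaDiffAt (β : Set (Set X)) (f : X → Z) (x₀ : X) (L : X →L[ℝ] Z) : Prop :=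
  ∀ A ∈ β, ∀ ε > 0, ∃ δ > 0, ∀ t : ℝ, t ≠ 0 → |t| < δ → ∀ u ∈ A,
    ‖t⁻¹ • (f (x₀ + t • u) - f x₀) - L u‖ ≤ ε

/-- The Gâteaux bornology: nonempty finite sets. -/
def gateauxB (X : Type*) [NormedAddCommGroup X] : Set (Set X) :=
  {A | A.Nonempty ∧ A.Finite}

/-- The Fréchet bornology: nonempty bounded sets. -/
def frechetB (X : Type*) [NormedAddCommGroup X] : Set (Set X) :=
  {A | A.Nonempty ∧ IsBounded A}

/-- The Hadamard bornology: nonempty relatively norm-compact sets. -/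
def hadamardB (X : Type*) [NormedAddCommGroup X] : Set (Set X) :=
  {A | A.Nonempty ∧ IsCompact (closure A)}

/-- A bounded set is limited if every weak*-null sequence converges to 0 uniformly on it. -/
def IsLimitedSet (A : Set X) : Prop :=
  IsBounded A ∧ ∀ φ : ℕ → X →L[ℝ] ℝ,
    (∀ x : X, Tendsto (fun n => φ n x) atTop (nhds 0)) →
    ∀ ε > 0, ∃ N : ℕ, ∀ n ≥ N, ∀ x ∈ A, |φ n x| ≤ ε

/-- The limited bornology: nonempty limited sets. -/
def limitedB (X : Type*) [NormedAddCommGroup X] [NormedSpace ℝ X] : Set (Set X) :=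
  {A | A.Nonempty ∧ IsLimitedSet A}

/-- A set is relatively weakly compact if its closure in the weak topology is compact. -/
def RelWeaklyCompact (A : Set X) : Prop :=
  IsCompact (closure (⇑(toWeakSpace ℝ X) '' A) : Set (WeakSpace ℝ X))

/-- The weak-Hadamard bornology: nonempty relatively weakly compact sets. -/
def wHB (X : Type*) [NormedAddCommGroup X] [NormedSpace ℝ X] : Set (Set X) :=
  {A | A.Nonempty ∧ RelWeaklyCompact A}

/-- A bornology (as a family of sets). -/
def IsBornologyFamily (β : Set (Set X)) : Prop :=
  (∀ A ∈ β, A.Nonempty ∧ IsBounded A) ∧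
  (⋃ A ∈ β, A) = univ ∧
  (∀ A ∈ β, ∀ B ∈ β, A ∪ B ∈ β) ∧
  (∀ A ∈ β, ∀ B : Set X, B ⊆ A → B.Nonempty → B ∈ β)

/-- A vector bornology. -/
def IsVectorBornology (β : Set (Set X)) : Prop :=
  IsBornologyFamily β ∧
  (∀ A ∈ β, balancedHull ℝ A ∈ β) ∧
  (∀ A ∈ β, ∀ (x : X) (l : ℝ), (fun z => x + l • z) '' A ∈ β)

/-- `(x, δ)` witnesses property (S) for the set `A`. -/
def WitnessS (β : Set (Set X)) (A : Set X) (x : ℕ → X) (δ : ℝ) : Prop :=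
  (∀ n, x n ∈ A) ∧ 0 < δ ∧
  ∀ nk : ℕ → ℕ, StrictMono nk → ∀ y : ℕ → X,
    (∀ k, ‖y k - x (nk k)‖ ≤ δ) → Set.range y ∉ β

/-- Property (S) for a bornology. -/
def PropertyS (β : Set (Set X)) : Prop :=
  ∀ A : Set X, IsBounded A → A ∉ β → ∃ x δ, WitnessS β A x δ

/-- `T` is `β`-positively homogeneous differentiable at `y` with p.h. differential `R`. -/
def PHDiffAt {Y : Type*} [NormedAddCommGroup Y] [NormedSpace ℝ Y]
    (β : Set (Set Y)) (T : Y → X) (y : Y) (R : Y → X) : Prop :=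
  Continuous R ∧ (∀ c : ℝ, 0 ≤ c → ∀ z, R (c • z) = c • R z) ∧
  ∀ A ∈ β, ∀ ε > 0, ∃ δ > 0, ∀ t : ℝ, 0 < t → t < δ → ∀ z ∈ A,
    ‖t⁻¹ • (T (y + t • z) - T y) - R z‖ ≤ ε

end Defs



section AuxGP
variable {X : Type*} [NormedAddCommGroup X] [NormedSpace ℝ X]

lemma isLimited_of_finite {A : Set X} (h : A.Finite) : IsLimitedSet A := by
  refine ⟨h.isBounded, fun φ hφ ε hε => ?_⟩
  have : ∀ᶠ n in atTop, ∀ x ∈ A, |φ n x| ≤ ε := by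
    refine (eventually_all_finite h).2 fun x _ => ?_
    have h2 : Tendsto (fun n => |φ n x|) atTop (nhds 0) := by
      simpa using (hφ x).abs
    exact (h2.eventually (eventually_lt_nhds hε)).mono fun n h => h.le
  exact eventually_atTop.1 this

lemma limited_subset {A B : Set X} (h : IsLimitedSet A) (hBA : B ⊆ A) : IsLimitedSet B := by
  refine ⟨h.1.subset hBA, fun φ hφ ε hε => ?_⟩
  obtain ⟨N, hN⟩ := h.2 φ hφ ε hε
  exact ⟨N, fun n hn x hx => hN n hn x (hBA hx)⟩

lemma exists_sep_seq {A : Set X} (hA : ¬ TotallyBounded A) :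
    ∃ ε > 0, ∃ x : ℕ → X, (∀ n, x n ∈ A) ∧ ∀ m n, m ≠ n → ε ≤ ‖x m - x n‖ := by
  rw [Metric.totallyBounded_iff] at hA
  push_neg at hA
  obtain ⟨ε, hε, hnet⟩ := hA
  refine ⟨ε, hε, ?_⟩
  have pick : ∀ l : List X, ∃ z ∈ A, ∀ w ∈ l, ε ≤ dist z w := by
    intro l
    have hns := hnet {w | w ∈ l} (l.finite_toSet)
    rw [Set.not_subset] at hns
    obtain ⟨z, hzA, hz⟩ := hns
    refine ⟨z, hzA, fun w hw => ?_⟩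
    by_contra h
    push_neg at h
    exact hz (Set.mem_biUnion hw (by simpa [Metric.mem_ball, dist_comm] using h))
  choose pk hpkA hpk using pick
  let aux : ℕ → List X := fun n => Nat.rec [] (fun _ l => pk l :: l) n
  have haux : ∀ n, aux (n+1) = pk (aux n) :: aux n := fun n => rfl
  set x : ℕ → X := fun n => pk (aux n) with hx
  have hmem : ∀ m n, m < n → x m ∈ aux n := by
    intro m n h
    induction n with
    | zero => omega
    | succ k ih =>
      rw [haux]
      rcases Nat.lt_succ_iff_lt_or_eq.1 h with h' | h'
      · exact List.mem_cons_of_mem _ (ih h')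
      · subst h'; exact List.mem_cons_self
  have key : ∀ m n, m < n → ε ≤ ‖x n - x m‖ := by
    intro m n h
    have := hpk (aux n) (x m) (hmem m n h)
    simpa [dist_eq_norm] using this
  refine ⟨x, fun n => hpkA _, fun m n hmn => ?_⟩
  rcases lt_or_gt_of_ne hmn with h | h
  · rw [show ‖x m - x n‖ = ‖x n - x m‖ from norm_sub_rev _ _]; exact key m n h
  · exact key n m h

lemma gateaux_of_limited {f : X → ℝ} {x : X} {L : X →L[ℝ] ℝ}
    (h : BetaDiffAt (limitedB X) f x L) : BetaDiffAt (gateauxB X) f x L := by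
  intro A hA ε hε
  exact h A ⟨hA.1, isLimited_of_finite hA.2⟩ ε hε

lemma limited_of_gateaux_of_GP
    (hGP : ∀ A : Set X, IsLimitedSet A → IsCompact (closure A))
    {f : X → ℝ} {K : ℝ≥0} (hf : LipschitzWith K f) {x : X} {L : X →L[ℝ] ℝ}
    (h : BetaDiffAt (gateauxB X) f x L) : BetaDiffAt (limitedB X) f x L := by
  rintro A ⟨hAne, hAlim⟩ ε hε
  have htb : TotallyBounded A :=
    (hGP A hAlim).totallyBounded.subset subset_closure
  set ρ : ℝ := ε / (3 * (K + ‖L‖ + 1)) with hρdef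
  have hden : (0:ℝ) < 3 * (K + ‖L‖ + 1) := by positivity
  have hρ : 0 < ρ := div_pos hε hden
  obtain ⟨s, hsfin, hscov⟩ := (Metric.totallyBounded_iff).1 htb ρ hρ
  have hsne : s.Nonempty := by
    obtain ⟨a, ha⟩ := hAne
    obtain ⟨_, ⟨y, rfl⟩, hy⟩ := hscov ha
    obtain ⟨_, ⟨hy', rfl⟩, _⟩ := hy
    exact ⟨y, hy'⟩
  obtain ⟨δ, hδ, hδ'⟩ := h s ⟨hsne, hsfin⟩ (ε/3) (by linarith)
  refine ⟨δ, hδ, fun t ht htδ u hu => ?_⟩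
  obtain ⟨i, hi, hdi⟩ : ∃ i ∈ s, dist u i < ρ := by
    have := hscov hu
    simp only [Set.mem_iUnion, Metric.mem_ball] at this
    obtain ⟨i, hi, hdi⟩ := this
    exact ⟨i, hi, hdi⟩
  have h1 : ‖t⁻¹ • (f (x + t • u) - f (x + t • i))‖ ≤ K * dist u i := by
    rw [norm_smul, norm_inv]
    have := hf.dist_le_mul (x + t • u) (x + t • i)
    have h2 : dist (x + t • u) (x + t • i) = |t| * dist u i := by
      rw [dist_add_left, dist_eq_norm, ← smul_sub, norm_smul, Real.norm_eq_abs, dist_eq_norm]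
    rw [h2] at this
    calc ‖t‖⁻¹ * ‖f (x + t • u) - f (x + t • i)‖
        ≤ ‖t‖⁻¹ * (K * (|t| * dist u i)) := by
          apply mul_le_mul_of_nonneg_left _ (by positivity)
          rw [← dist_eq_norm]; exact this
      _ = K * dist u i := by
          rw [Real.norm_eq_abs]
          field_simp
  have h2 := hδ' t ht htδ i hi
  have h3 : ‖L i - L u‖ ≤ ‖L‖ * dist u i := by
    rw [← map_sub]
    calc ‖L (i - u)‖ ≤ ‖L‖ * ‖i - u‖ := L.le_opNorm _
      _ = ‖L‖ * dist u i := by rw [dist_eq_norm, norm_sub_rev]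
  have hdist : dist u i ≤ ρ := hdi.le
  have hKρ : (K:ℝ) * dist u i ≤ ε / 3 := by
    have h4 : (K:ℝ) * dist u i ≤ (K + ‖L‖ + 1) * ρ := by
      apply mul_le_mul (by linarith [norm_nonneg L]) hdist dist_nonneg (by positivity)
    have h5 : (K + ‖L‖ + 1) * ρ = ε / 3 := by
      rw [hρdef]; field_simp
    linarith
  have hLρ : ‖L‖ * dist u i ≤ ε / 3 := by
    have h4 : ‖L‖ * dist u i ≤ (K + ‖L‖ + 1) * ρ := by
      apply mul_le_mul (by linarith [NNReal.coe_nonneg K]) hdist dist_nonneg (by positivity)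
    have h5 : (K + ‖L‖ + 1) * ρ = ε / 3 := by
      rw [hρdef]; field_simp
    linarith
  calc ‖t⁻¹ • (f (x + t • u) - f x) - L u‖
      = ‖(t⁻¹ • (f (x + t • u) - f (x + t • i))) +
          ((t⁻¹ • (f (x + t • i) - f x) - L i)) + (L i - L u)‖ := by
        congr 1
        simp only [smul_sub, smul_eq_mul]
        ring
    _ ≤ ‖t⁻¹ • (f (x + t • u) - f (x + t • i))‖ +
          ‖t⁻¹ • (f (x + t • i) - f x) - L i‖ + ‖L i - L u‖ := norm_add₃_le
    _ ≤ K * dist u i + ε/3 + ‖L‖ * dist u i := by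
        gcongr
    _ ≤ ε := by linarith


set_option maxHeartbeats 1600000 in
lemma not_GP_counterexample [CompleteSpace X] {A : Set X} (hlim : IsLimitedSet A)
    (hnc : ¬ IsCompact (closure A)) :
    ∃ f : X → ℝ, LipschitzWith 1 f ∧
      (∃ L : X →L[ℝ] ℝ, BetaDiffAt (gateauxB X) f 0 L) ∧
      ¬ (∃ L : X →L[ℝ] ℝ, BetaDiffAt (limitedB X) f 0 L) := by
  have htb : ¬ TotallyBounded A := by
    intro h
    exact hnc (TotallyBounded.isCompact_of_isClosed h.closure isClosed_closure)
  obtain ⟨ε, hε, x, hxA, hsep⟩ := exists_sep_seq htb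
  obtain ⟨C, hC⟩ := isBounded_iff_forall_norm_le.1 hlim.1
  set M : ℝ := max C 1 with hM
  have hM1 : (1:ℝ) ≤ M := le_max_right _ _
  have hM0 : (0:ℝ) < M := lt_of_lt_of_le one_pos hM1
  have hxM : ∀ n, ‖x n‖ ≤ M := fun n => (hC _ (hxA n)).trans (le_max_left _ _)
  have hεM : ε ≤ 2 * M := by
    have h1 := hsep 0 1 (by norm_num)
    have h2 := norm_sub_le (x 0) (x 1)
    have h3 := hxM 0
    have h4 := hxM 1
    linarith
  obtain ⟨m₀, hm₀⟩ : ∃ m₀ : ℕ, ∀ n, ε/2 ≤ ‖x (n + m₀)‖ := by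
    by_contra hcon
    push_neg at hcon
    obtain ⟨n₀, hn₀⟩ := hcon 0
    obtain ⟨n₁, hn₁⟩ := hcon (n₀ + 1)
    have hne : n₀ + 0 ≠ n₁ + (n₀ + 1) := by omega
    have h1 := hsep _ _ hne
    have h2 := norm_sub_le (x (n₀ + 0)) (x (n₁ + (n₀ + 1)))
    have h3 := norm_nonneg (x (n₀ + 0))
    linarith
  set y : ℕ → X := fun n => x (n + m₀) with hy
  have hyA : ∀ n, y n ∈ A := fun n => hxA _
  have hyM : ∀ n, ‖y n‖ ≤ M := fun n => hxM _
  have hylb : ∀ n, ε/2 ≤ ‖y n‖ := hm₀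
  have hysep : ∀ n m, n ≠ m → ε ≤ ‖y n - y m‖ := fun n m h => hsep _ _ (by omega)
  set θ : ℝ := min (1/2) (ε/(8*M)) with hθ
  have hθ0 : 0 < θ := lt_min (by norm_num) (by positivity)
  have hθ2 : θ ≤ 1/2 := min_le_left _ _
  have hθ1 : θ < 1 := by linarith
  have hθM : θ * M ≤ ε/8 := by
    have h1 : θ ≤ ε/(8*M) := min_le_right _ _
    calc θ * M ≤ (ε/(8*M)) * M := by nlinarith
      _ = ε/8 := by field_simp
  have htpos : ∀ n : ℕ, (0:ℝ) < θ^n := fun n => pow_pos hθ0 n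
  have htanti : ∀ {n m : ℕ}, n ≤ m → θ^m ≤ θ^n :=
    fun h => pow_le_pow_of_le_one hθ0.le hθ1.le h
  have htstep : ∀ {n m : ℕ}, m < n → θ^n ≤ θ * θ^m := by
    intro n m h
    calc θ^n ≤ θ^(m+1) := htanti h
      _ = θ * θ^m := by rw [pow_succ]; ring
  set r : ℕ → ℝ := fun n => (ε/8) * θ^n with hr
  set c : ℕ → X := fun n => θ^n • y n with hc
  have hceq : ∀ n, c n = θ^n • y n := fun n => rfl
  have hcnorm : ∀ n, ‖c n‖ = θ^n * ‖y n‖ := by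
    intro n
    rw [hceq n, norm_smul, Real.norm_eq_abs, abs_of_pos (htpos n)]
  have hrpos : ∀ n, 0 < r n := fun n => by
    have := htpos n; simp only [hr]; positivity
  set g : ℕ → X → ℝ := fun n z => max 0 (r n - ‖z - c n‖) with hg
  set f : X → ℝ := fun z => ⨆ n, g n z with hf
  have hgle : ∀ n z, g n z ≤ ε/8 := by
    intro n z
    apply max_le (by positivity)
    have h1 : θ^n ≤ 1 := pow_le_one₀ hθ0.le hθ1.le
    have h2 := norm_nonneg (z - c n)
    simp only [hr]
    nlinarith
  have hbdd : ∀ z, BddAbove (Set.range fun n => g n z) :=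
    fun z => ⟨ε/8, by rintro _ ⟨n, rfl⟩; exact hgle n z⟩
  have hglip : ∀ n (a b : X), g n a ≤ g n b + ‖a - b‖ := by
    intro n a b
    apply max_le
    · exact add_nonneg (le_max_left 0 _) (norm_nonneg _)
    · have h1 : ‖b - c n‖ ≤ ‖a - b‖ + ‖a - c n‖ := by
        have h0 := dist_triangle b a (c n)
        rw [dist_eq_norm, dist_eq_norm, dist_eq_norm, norm_sub_rev b a] at h0
        exact h0
      have h2 : r n - ‖b - c n‖ ≤ g n b := le_max_right _ _
      linarith
  have hfle : ∀ a b : X, f a ≤ f b + ‖a - b‖ := fun a b =>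
    ciSup_le fun n => (hglip n a b).trans (add_le_add_left (le_ciSup (hbdd b) n) _)
  have hflip : LipschitzWith 1 f := by
    refine LipschitzWith.of_dist_le_mul fun a b => ?_
    rw [NNReal.coe_one, one_mul, Real.dist_eq, dist_eq_norm, abs_sub_le_iff]
    constructor
    · linarith [hfle a b]
    · have h1 := hfle b a
      rw [norm_sub_rev] at h1
      linarith
  have hfzero : ∀ z : X, (∀ n, r n ≤ ‖z - c n‖) → f z = 0 := by
    intro z hz
    have h0 : ∀ n, g n z = 0 := fun n => max_eq_left (by linarith [hz n])
    show (⨆ n, g n z) = 0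
    simp only [h0]
    exact ciSup_const
  have hflower : ∀ n, r n ≤ f (c n) := by
    intro n
    have h1 : g n (c n) = r n := by
      show max 0 (r n - ‖c n - c n‖) = r n
      rw [sub_self, norm_zero, sub_zero]
      exact max_eq_right (hrpos n).le
    calc r n = g n (c n) := h1.symm
      _ ≤ f (c n) := le_ciSup (hbdd (c n)) n
  have hf0 : f 0 = 0 := by
    apply hfzero
    intro n
    rw [zero_sub, norm_neg, hcnorm n]
    have h1 := hylb n
    have h2 := htpos n
    simp only [hr]
    nlinarith
  have hfneg : ∀ n, f (-(c n)) = 0 := by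
    intro n
    apply hfzero
    intro m
    have hkey : -(c n) - c m = -(c n + c m) := by abel
    rw [hkey, norm_neg]
    have hlb : ∀ a b : X, ‖a‖ - ‖b‖ ≤ ‖a + b‖ := by
      intro a b
      have h1 := norm_sub_norm_le a (-b)
      rw [sub_neg_eq_add, norm_neg] at h1
      exact h1
    rcases lt_trichotomy m n with hmn | hmn | hmn
    · -- m < n : use ‖c m‖ - ‖c n‖
      have h1 : ‖c m‖ - ‖c n‖ ≤ ‖c n + c m‖ := by
        have := hlb (c m) (c n)
        rw [add_comm] at this
        exact this
      have h2 : θ^m * (ε/2) ≤ ‖c m‖ := by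
        rw [hcnorm m]; nlinarith [hylb m, htpos m]
      have h3 : ‖c n‖ ≤ θ^m * (ε/8) := by
        rw [hcnorm n]
        have h4 : θ^n ≤ θ * θ^m := htstep hmn
        have h5 := hyM n
        have h6 := htpos n
        have h7 := htpos m
        nlinarith [norm_nonneg (y n), hθM]
      simp only [hr]
      nlinarith [htpos m]
    · subst hmn
      have h1 : c m + c m = (2:ℝ) • c m := (two_smul ℝ (c m)).symm
      rw [h1, norm_smul, Real.norm_eq_abs]
      rw [hcnorm m]
      have h2 := hylb m
      have h3 := htpos m
      simp only [hr]
      rw [abs_of_pos (by norm_num : (0:ℝ) < 2)]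
      nlinarith
    · -- n < m
      have h1 : ‖c n‖ - ‖c m‖ ≤ ‖c n + c m‖ := hlb (c n) (c m)
      have h2 : θ^n * (ε/2) ≤ ‖c n‖ := by
        rw [hcnorm n]; nlinarith [hylb n, htpos n]
      have h3 : ‖c m‖ ≤ θ^n * (ε/8) := by
        rw [hcnorm m]
        have h4 : θ^m ≤ θ * θ^n := htstep hmn
        have h5 := hyM m
        have h6 := htpos m
        have h7 := htpos n
        nlinarith [norm_nonneg (y m), hθM]
      have h8 : θ^m ≤ θ^n := htanti hmn.le
      simp only [hr]
      nlinarith [htpos n]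
  -- the key claim for Gateaux differentiability
  have claim_u : ∀ u : X, ∃ δ > 0, ∀ t : ℝ, t ≠ 0 → |t| < δ → f (t • u) = 0 := by
    intro u
    by_cases hu : u = 0
    · exact ⟨1, one_pos, fun t _ _ => by rw [hu, smul_zero]; exact hf0⟩
    have hu0 : 0 < ‖u‖ := norm_pos_iff.2 hu
    set Hit : Set ℕ := {n | ∃ s : ℝ, ‖s • u - c n‖ < r n} with hHit
    have hσ : ∀ n ∈ Hit, ∃ σ : ℝ, ‖σ • u - y n‖ < ε/8 := by
      rintro n ⟨s, hs⟩
      refine ⟨s / θ^n, ?_⟩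
      have hkey : s • u - c n = θ^n • ((s/θ^n) • u - y n) := by
        rw [hceq n, smul_sub, smul_smul]
        congr 2
        field_simp
      rw [hkey, norm_smul, Real.norm_eq_abs, abs_of_pos (htpos n)] at hs
      simp only [hr] at hs
      nlinarith [htpos n]
    choose! σ hσ' using hσ
    have hHitfin : Hit.Finite := by
      set cst : ℝ := 4 * ‖u‖ / (3 * ε) with hcst
      have hcst0 : 0 < cst := by positivity
      have hσb : ∀ n ∈ Hit, |σ n| * ‖u‖ ≤ 2 * M := by
        intro n hn
        have h1 := hσ' n hn
        have h2 : ‖σ n • u‖ - ‖y n‖ ≤ ‖σ n • u - y n‖ := norm_sub_norm_le _ _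
        rw [norm_smul, Real.norm_eq_abs] at h2
        have h3 := hyM n
        linarith
      have hσsep : ∀ n ∈ Hit, ∀ m ∈ Hit, n ≠ m → 3*ε/4 ≤ |σ n - σ m| * ‖u‖ := by
        intro n hn m hm hnm
        have h1 := hσ' n hn
        have h2 := hσ' m hm
        have h3 := hysep n m hnm
        have h4 : ‖y n - y m‖ ≤ ‖y n - σ n • u‖ + ‖σ n • u - σ m • u‖ + ‖σ m • u - y m‖ := by
          have heq : y n - y m = (y n - σ n • u) + (σ n • u - σ m • u) + (σ m • u - y m) := by
            abel
          rw [heq]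
          exact norm_add₃_le
        have h5 : ‖σ n • u - σ m • u‖ = |σ n - σ m| * ‖u‖ := by
          rw [← sub_smul, norm_smul, Real.norm_eq_abs]
        rw [norm_sub_rev (y n) (σ n • u)] at h4
        linarith
      have hinj : Set.InjOn (fun n => ⌊σ n * cst⌋) Hit := by
        intro n hn m hm heq
        by_contra hnm
        have hsep' := hσsep n hn m hm hnm
        have h1 : |σ n * cst - σ m * cst| < 1 := Int.abs_sub_lt_one_of_floor_eq_floor heq
        have h2 : |σ n * cst - σ m * cst| = |σ n - σ m| * cst := by
          rw [← sub_mul, abs_mul, abs_of_pos hcst0]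
        have h3 : (1:ℝ) ≤ |σ n - σ m| * cst := by
          have h4 : (0:ℝ) < 3*ε := by linarith
          calc (1:ℝ) = (3*ε/4) * (4/(3*ε)) := by field_simp
            _ ≤ (|σ n - σ m| * ‖u‖) * (4/(3*ε)) := by gcongr
            _ = |σ n - σ m| * cst := by rw [hcst]; ring
        linarith [h2 ▸ h1]
      set B : ℤ := ⌈(2*M/‖u‖) * cst + 1⌉ with hB
      have himg : (fun n => ⌊σ n * cst⌋) '' Hit ⊆ Set.Icc (-B) B := by
        rintro _ ⟨n, hn, rfl⟩
        have hb := hσb n hn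
        have habs : |σ n * cst| ≤ (2*M/‖u‖) * cst := by
          rw [abs_mul, abs_of_pos hcst0]
          apply mul_le_mul_of_nonneg_right _ hcst0.le
          rw [le_div_iff₀ hu0]
          exact hb
        have hD0 : (0:ℝ) ≤ (2*M/‖u‖) * cst := le_trans (abs_nonneg _) habs
        have hBc : ((2*M/‖u‖) * cst + 1) ≤ (B:ℝ) := Int.le_ceil _
        have hfl₁ : (⌊σ n * cst⌋ : ℝ) ≤ σ n * cst := Int.floor_le _
        have hfl₂ : σ n * cst - 1 < (⌊σ n * cst⌋ : ℝ) := Int.sub_one_lt_floor _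
        have habs' := abs_le.1 habs
        constructor
        · have : (-B : ℝ) < (⌊σ n * cst⌋ : ℝ) := by
            push_cast
            linarith
          exact_mod_cast this.le
        · have : (⌊σ n * cst⌋ : ℝ) ≤ (B:ℝ) := by linarith
          exact_mod_cast this
      exact Set.Finite.of_finite_image ((Set.finite_Icc (-B) B).subset himg) hinj
    obtain ⟨N, hN⟩ := hHitfin.bddAbove
    refine ⟨(3*ε/8) * θ^N / ‖u‖, by positivity, fun t ht htδ => ?_⟩
    by_contra hfne
    have hhit : ∃ n, ‖t • u - c n‖ < r n := by
      by_contra hno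
      push_neg at hno
      exact hfne (hfzero _ hno)
    obtain ⟨n, hn⟩ := hhit
    have hnN : n ≤ N := hN ⟨t, hn⟩
    have h1 : θ^N ≤ θ^n := htanti hnN
    have h2 : (3*ε/8) * θ^n ≤ |t| * ‖u‖ := by
      have hsmul : ‖t • u‖ = |t| * ‖u‖ := by rw [norm_smul, Real.norm_eq_abs]
      have h3 : ‖c n‖ - ‖t • u‖ ≤ ‖c n - t • u‖ := norm_sub_norm_le _ _
      rw [norm_sub_rev (c n) (t • u), hsmul] at h3
      have h4 : θ^n * (ε/2) ≤ ‖c n‖ := by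
        rw [hcnorm n]; nlinarith [hylb n, htpos n]
      simp only [hr] at hn
      nlinarith [htpos n]
    have h5 : |t| * ‖u‖ < (3*ε/8) * θ^N := by
      calc |t| * ‖u‖ < ((3*ε/8) * θ^N / ‖u‖) * ‖u‖ := by
            exact mul_lt_mul_of_pos_right htδ hu0
        _ = (3*ε/8) * θ^N := by field_simp
    nlinarith [htpos N, htpos n,
      mul_le_mul_of_nonneg_left h1 (by linarith : (0:ℝ) ≤ 3*ε/8)]
  have hG : BetaDiffAt (gateauxB X) f 0 0 := by
    rintro A0 ⟨hne, hfin⟩ ε' hε'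
    choose δf hδf0 hδf using claim_u
    obtain ⟨u₀, hu₀⟩ := hne
    have hsne : hfin.toFinset.Nonempty := ⟨u₀, hfin.mem_toFinset.2 hu₀⟩
    refine ⟨hfin.toFinset.inf' hsne δf, (Finset.lt_inf'_iff hsne).2 fun i _ => hδf0 i, ?_⟩
    intro t ht htδ u hu
    have hδu : hfin.toFinset.inf' hsne δf ≤ δf u := Finset.inf'_le _ (hfin.mem_toFinset.2 hu)
    have hfz := hδf u t ht (lt_of_lt_of_le htδ hδu)
    rw [zero_add, hfz, hf0]
    simp only [sub_zero, smul_zero, ContinuousLinearMap.zero_apply, zero_sub, norm_neg,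
      norm_zero]
    linarith
  refine ⟨f, hflip, ⟨0, hG⟩, ?_⟩
  rintro ⟨L, hL⟩
  have hmem : Set.range y ∈ limitedB X :=
    ⟨Set.range_nonempty y, limited_subset hlim (by rintro _ ⟨n, rfl⟩; exact hyA n)⟩
  obtain ⟨δ, hδ0, hδ⟩ := hL (Set.range y) hmem (ε/32) (by linarith)
  obtain ⟨n, hnδ⟩ := exists_pow_lt_of_lt_one hδ0 hθ1
  have htn := htpos n
  have ht1 := hδ (θ^n) (ne_of_gt htn) (by rwa [abs_of_pos htn]) (y n) ⟨n, rfl⟩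
  have ht2 := hδ (-(θ^n)) (by simp [ne_of_gt htn]) (by rwa [abs_neg, abs_of_pos htn]) (y n) ⟨n, rfl⟩
  rw [zero_add, hf0, sub_zero] at ht1 ht2
  have hfneg' : f ((-(θ^n)) • y n) = 0 := by
    rw [neg_smul, ← hceq n]
    exact hfneg n
  rw [hfneg'] at ht2
  have hLy : |L (y n)| ≤ ε/32 := by
    simpa using ht2
  have hq : ε/8 ≤ (θ^n)⁻¹ * f (θ^n • y n) := by
    have h3 : (ε/8) * θ^n ≤ f (θ^n • y n) := by
      have := hflower n
      rw [hceq n] at this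
      simpa [hr] using this
    calc ε/8 = (θ^n)⁻¹ * ((ε/8) * θ^n) := by field_simp
      _ ≤ (θ^n)⁻¹ * f (θ^n • y n) := by
          apply mul_le_mul_of_nonneg_left h3 (inv_nonneg.2 htn.le)
  have ht1' : |(θ^n)⁻¹ * f (θ^n • y n) - L (y n)| ≤ ε/32 := by
    simpa [smul_eq_mul] using ht1
  have h6 := abs_le.1 ht1'
  have h7 := abs_le.1 hLy
  linarith

end AuxGP

/-- `X` is a Gelfand-Phillips space iff Gâteaux and limited
differentiability coincide for real-valued Lipschitz functions. -/
theorem gelfandPhillips_iff_gateaux_eq_limited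
    {X : Type*} [NormedAddCommGroup X] [NormedSpace ℝ X] [CompleteSpace X] :
    (∀ A : Set X, IsLimitedSet A → IsCompact (closure A)) ↔
      ∀ f : X → ℝ, (∃ K : ℝ≥0, LipschitzWith K f) → ∀ x : X,
        ((∃ L : X →L[ℝ] ℝ, BetaDiffAt (gateauxB X) f x L) ↔
          (∃ L : X →L[ℝ] ℝ, BetaDiffAt (limitedB X) f x L)) := by
  constructor
  · intro hGP f hf x
    obtain ⟨K, hK⟩ := hf
    constructor
    · rintro ⟨L, hL⟩
      exact ⟨L, limited_of_gateaux_of_GP hGP hK hL⟩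
    · rintro ⟨L, hL⟩
      exact ⟨L, gateaux_of_limited hL⟩
  · intro h A hlim
    by_contra hnc
    obtain ⟨f, hlip, hG, hnL⟩ := not_GP_counterexample hlim hnc
    exact hnL ((h f ⟨1, hlip⟩ 0).1 hG)
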